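/- Let K ⊆ ℝ^d be a compact connected set. Suppose that for every x ∈ K there exists C_x > 0 such that for all f ∈ C¹(K) and all y ∈ K with y ≠ x one has |f(y) − f(x)|/|y − x| ≤ C_x ‖f‖_{C¹(K)}. Then K is pointwise Whitney regular. -/

import Mathlib

open Set Filter Topology MeasureTheory
open scoped NNReal ENNReal

noncomputable section

/-- `df` is a (not necessarily unique) derivative of `f` on the set `K`:
at every `x ∈ K`, `(f y - f x - ⟪df x, y - x⟫)/‖y - x‖ → 0` as `y → x` within `K`. -/
def IsDerivOn {d : ℕ} (K : Set (EuclideanSpace ℝ (Fin d)))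
    (f : EuclideanSpace ℝ (Fin d) → ℝ)
    (df : EuclideanSpace ℝ (Fin d) → EuclideanSpace ℝ (Fin d)) : Prop :=
  ∀ x ∈ K, Filter.Tendsto
    (fun y => (f y - f x - (inner ℝ (df x) (y - x) : ℝ)) / ‖y - x‖)
    (𝓝[K \ {x}] x) (𝓝 0)

/-- Sup norm of a function on `K`. -/
def supNormOn {d : ℕ} {α : Type*} [Norm α] (K : Set (EuclideanSpace ℝ (Fin d)))
    (g : EuclideanSpace ℝ (Fin d) → α) : ℝ :=
  sSup ((fun z => ‖g z‖) '' K)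

/-- `f ∈ C¹(K)`: `f` admits a continuous derivative on `K`. -/
def MemC1 {d : ℕ} (K : Set (EuclideanSpace ℝ (Fin d)))
    (f : EuclideanSpace ℝ (Fin d) → ℝ) : Prop :=
  ∃ df, ContinuousOn df K ∧ IsDerivOn K f df

/-- The quotient norm `‖f‖_{C¹(K)} = ‖f‖_K + inf {‖df‖_K : df a continuous derivative of f}`. -/
def c1Norm {d : ℕ} (K : Set (EuclideanSpace ℝ (Fin d)))
    (f : EuclideanSpace ℝ (Fin d) → ℝ) : ℝ :=
  supNormOn K f +
    sInf {r | ∃ df, ContinuousOn df K ∧ IsDerivOn K f df ∧ r = supNormOn K df}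

/-- `x` and `y` are joined by a rectifiable path inside `S` of length at most `L`. -/
def RectJoin {d : ℕ} (S : Set (EuclideanSpace ℝ (Fin d)))
    (x y : EuclideanSpace ℝ (Fin d)) (L : ℝ) : Prop :=
  ∃ γ : ℝ → EuclideanSpace ℝ (Fin d), ContinuousOn γ (Icc 0 1) ∧
    MapsTo γ (Icc 0 1) S ∧ γ 0 = x ∧ γ 1 = y ∧
    eVariationOn γ (Icc 0 1) ≤ ENNReal.ofReal L

/-- Pointwise Whitney regularity of a set. -/
def PointwiseWhitneyRegular {d : ℕ} (S : Set (EuclideanSpace ℝ (Fin d))) : Prop :=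
  ∀ x ∈ S, ∃ C > (0:ℝ), ∃ V ∈ 𝓝 x, ∀ y ∈ V ∩ S, RectJoin S x y (C * ‖x - y‖)


variable {X : Type*} [NormedAddCommGroup X]

/-- `p 0, …, p n` is a chain from `x` to `w` inside `S` with steps of length at most `ε`. -/
def IsEpsChain (S : Set X) (ε : ℝ) (x w : X) (n : ℕ) (p : ℕ → X) : Prop :=
  p 0 = x ∧ p n = w ∧ (∀ i ≤ n, p i ∈ S) ∧ ∀ i < n, ‖p (i + 1) - p i‖ ≤ ε

/-- Length of the chain `p 0, …, p n`. -/
def chainLen (p : ℕ → X) (n : ℕ) : ℝ := ∑ i ∈ Finset.range n, ‖p (i + 1) - p i‖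

/-- All lengths of `ε`-chains from `x` to `w` in `S`. -/
def chainLens (S : Set X) (ε : ℝ) (x w : X) : Set ℝ :=
  {ℓ | ∃ n p, IsEpsChain S ε x w n p ∧ ℓ = chainLen p n}

/-- Chain distance from `x` to `w` in `S` with gauge `ε`. -/
def cdist (S : Set X) (ε : ℝ) (x w : X) : ℝ := sInf (chainLens S ε x w)

lemma chainLen_nonneg (p : ℕ → X) (n : ℕ) : 0 ≤ chainLen p n :=
  Finset.sum_nonneg fun _ _ => norm_nonneg _

lemma chainLens_nonneg {S : Set X} {ε : ℝ} {x w : X} {ℓ : ℝ} (h : ℓ ∈ chainLens S ε x w) :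
    0 ≤ ℓ := by
  obtain ⟨n, p, _, rfl⟩ := h
  exact chainLen_nonneg p n

lemma bddBelow_chainLens (S : Set X) (ε : ℝ) (x w : X) : BddBelow (chainLens S ε x w) :=
  ⟨0, fun _ h => chainLens_nonneg h⟩

lemma cdist_nonneg (S : Set X) (ε : ℝ) (x w : X) : 0 ≤ cdist S ε x w :=
  Real.sInf_nonneg fun _ h => chainLens_nonneg h

lemma chainLens_self {S : Set X} {ε : ℝ} {x : X} (hx : x ∈ S) : (0 : ℝ) ∈ chainLens S ε x x := by
  refine ⟨0, fun _ => x, ⟨rfl, rfl, fun i _ => hx, fun i hi => absurd hi (Nat.not_lt_zero i)⟩, ?_⟩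
  simp [chainLen]

lemma cdist_self {S : Set X} {ε : ℝ} {x : X} (hx : x ∈ S) : cdist S ε x x ≤ 0 :=
  csInf_le (bddBelow_chainLens S ε x x) (chainLens_self hx)

lemma chainLens_extend {S : Set X} {ε : ℝ} {x w w' : X} {ℓ : ℝ}
    (h : ℓ ∈ chainLens S ε x w) (hw' : w' ∈ S) (hstep : ‖w' - w‖ ≤ ε) :
    ℓ + ‖w' - w‖ ∈ chainLens S ε x w' := by
  obtain ⟨n, p, ⟨h0, hn, hmem, hsteps⟩, rfl⟩ := h
  refine ⟨n + 1, fun i => if i ≤ n then p i else w', ?_, ?_⟩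
  · refine ⟨by simp [h0], ?_, ?_, ?_⟩
    · show (if n + 1 ≤ n then p (n + 1) else w') = w'
      rw [if_neg (by omega)]
    · intro i hi
      show (if i ≤ n then p i else w') ∈ S
      by_cases h : i ≤ n
      · simpa [h] using hmem i h
      · simpa [h] using hw'
    · intro i hi
      show ‖(if i + 1 ≤ n then p (i + 1) else w') - (if i ≤ n then p i else w')‖ ≤ ε
      rcases Nat.lt_succ_iff_lt_or_eq.1 hi with h | rfl
      · rw [if_pos (by omega : i + 1 ≤ n), if_pos (by omega : i ≤ n)]
        exact hsteps i h
      · rw [if_neg (by omega), if_pos (le_refl i), hn]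
        exact hstep
  · rw [chainLen, chainLen, Finset.sum_range_succ]
    congr 1
    · refine Finset.sum_congr rfl fun i hi => ?_
      rw [Finset.mem_range] at hi
      show _ = ‖(if i + 1 ≤ n then p (i + 1) else w') - (if i ≤ n then p i else w')‖
      rw [if_pos (by omega : i + 1 ≤ n), if_pos (by omega : i ≤ n)]
    · show ‖w' - w‖ = ‖(if n + 1 ≤ n then p (n + 1) else w') - (if n ≤ n then p n else w')‖
      rw [if_neg (by omega), if_pos (le_refl n), hn]

lemma chainLens_nonempty_extend {S : Set X} {ε : ℝ} {x w w' : X}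
    (h : (chainLens S ε x w).Nonempty) (hw' : w' ∈ S) (hstep : ‖w' - w‖ ≤ ε) :
    (chainLens S ε x w').Nonempty := by
  obtain ⟨ℓ, hℓ⟩ := h
  exact ⟨_, chainLens_extend hℓ hw' hstep⟩

lemma cdist_le_extend {S : Set X} {ε : ℝ} {x w w' : X}
    (h : (chainLens S ε x w).Nonempty) (hw' : w' ∈ S) (hstep : ‖w' - w‖ ≤ ε) :
    cdist S ε x w' ≤ cdist S ε x w + ‖w' - w‖ := by
  obtain ⟨ℓ₀, hℓ₀⟩ := h
  refine le_trans ?_ (add_le_add_right (le_refl _) _)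
  have : ∀ ℓ ∈ chainLens S ε x w, cdist S ε x w' ≤ ℓ + ‖w' - w‖ := fun ℓ hℓ =>
    csInf_le (bddBelow_chainLens S ε x w') (chainLens_extend hℓ hw' hstep)
  have h2 : cdist S ε x w' - ‖w' - w‖ ≤ cdist S ε x w :=
    le_csInf ⟨ℓ₀, hℓ₀⟩ fun ℓ hℓ => by linarith [this ℓ hℓ]
  linarith

/-- In an open preconnected set, any two points are joined by an `ε`-chain. -/
lemma chainLens_nonempty_of_preconnected {S : Set X} (hS : IsOpen S) (hSc : IsPreconnected S)
    {ε : ℝ} (hε : 0 < ε) {x : X} (hx : x ∈ S) {w : X} (hw : w ∈ S) :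
    (chainLens S ε x w).Nonempty := by
  by_contra hne
  set R : Set X := {v | v ∈ S ∧ (chainLens S ε x v).Nonempty} with hR
  have hRopen : IsOpen R := by
    rw [Metric.isOpen_iff]
    rintro v ⟨hvS, hvne⟩
    obtain ⟨r, hr, hball⟩ := Metric.isOpen_iff.1 hS v hvS
    refine ⟨min r ε, lt_min hr hε, fun u hu => ?_⟩
    have huS : u ∈ S := hball (Metric.ball_subset_ball (min_le_left _ _) hu)
    have : ‖u - v‖ ≤ ε := by
      rw [← dist_eq_norm]
      exact le_of_lt (lt_of_lt_of_le (Metric.mem_ball.1 hu) (min_le_right _ _))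
    exact ⟨huS, chainLens_nonempty_extend hvne huS this⟩
  have hCopen : IsOpen {v | v ∈ S ∧ ¬(chainLens S ε x v).Nonempty} := by
    rw [Metric.isOpen_iff]
    rintro v ⟨hvS, hvne⟩
    obtain ⟨r, hr, hball⟩ := Metric.isOpen_iff.1 hS v hvS
    refine ⟨min r ε, lt_min hr hε, fun u hu => ?_⟩
    have huS : u ∈ S := hball (Metric.ball_subset_ball (min_le_left _ _) hu)
    refine ⟨huS, fun hune => hvne ?_⟩
    have : ‖v - u‖ ≤ ε := by
      rw [← dist_eq_norm, dist_comm]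
      exact le_of_lt (lt_of_lt_of_le (Metric.mem_ball.1 hu) (min_le_right _ _))
    exact chainLens_nonempty_extend hune hvS this
  obtain ⟨z, hz⟩ := hSc R _ hRopen hCopen
    (fun v hv => by
      by_cases h : (chainLens S ε x v).Nonempty
      · exact Or.inl ⟨hv, h⟩
      · exact Or.inr ⟨hv, h⟩)
    ⟨x, hx, hx, ⟨0, chainLens_self hx⟩⟩ ⟨w, hw, hw, hne⟩
  exact hz.2.2.2 hz.2.1.2

/-- The thickening of a preconnected set in a real normed space is preconnected. -/
lemma isPreconnected_thickening {Y : Type*} [NormedAddCommGroup Y] [NormedSpace ℝ Y]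
    {K : Set Y} (hK : IsPreconnected K) {r : ℝ} (hr : 0 < r) :
    IsPreconnected (Metric.thickening r K) := by
  rcases K.eq_empty_or_nonempty with rfl | ⟨x₀, hx₀⟩
  · simpa [Metric.thickening_empty] using isPreconnected_empty
  have heq : Metric.thickening r K = ⋃₀ ((fun z => K ∪ Metric.ball z r) '' K) := by
    ext u
    simp only [Set.sUnion_image, Set.mem_iUnion, Set.mem_union, Metric.mem_thickening_iff]
    constructor
    · rintro ⟨z, hz, hd⟩
      exact ⟨z, hz, Or.inr (Metric.mem_ball.2 hd)⟩
    · rintro ⟨z, hz, h | h⟩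
      · exact ⟨u, h, by simpa using hr⟩
      · exact ⟨z, hz, Metric.mem_ball.1 h⟩
  rw [heq]
  refine isPreconnected_sUnion x₀ _ ?_ ?_
  · rintro s ⟨z, hz, rfl⟩
    exact Or.inl hx₀
  · rintro s ⟨z, hz, rfl⟩
    exact hK.union z hz (Metric.mem_ball_self hr)
      (convex_ball z r).isPreconnected

lemma abs_min_sub_min_le {a b c : ℝ} : |min a c - min b c| ≤ |a - b| := by
  have h1 := le_abs_self (a - b)
  have h2 := neg_abs_le (a - b)
  rw [min_def, min_def, abs_le]
  split_ifs <;> constructor <;> linarith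

section DFun
open scoped Classical

variable {X : Type*} [NormedAddCommGroup X]

/-- Truncated chain distance, extended by `T` outside `S`. -/
noncomputable def DFun (S : Set X) (ε : ℝ) (x : X) (T : ℝ) (w : X) : ℝ :=
  if w ∈ S then min (cdist S ε x w) T else T

variable {S : Set X} {ε T : ℝ} {x : X}

lemma DFun_nonneg (hT : 0 ≤ T) (w : X) : 0 ≤ DFun S ε x T w := by
  unfold DFun; split_ifs
  · exact le_min (cdist_nonneg S ε x w) hT
  · exact hT

lemma DFun_le (hT : 0 ≤ T) (w : X) : DFun S ε x T w ≤ T := by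
  unfold DFun; split_ifs
  · exact min_le_right _ _
  · exact le_rfl

lemma DFun_lip (hS : IsOpen S) (hSc : IsPreconnected S) (hε : 0 < ε) (hx : x ∈ S)
    {w w' : X} (hw : w ∈ S) (hw' : w' ∈ S) (hstep : ‖w' - w‖ ≤ ε) :
    |DFun S ε x T w' - DFun S ε x T w| ≤ ‖w' - w‖ := by
  have hne : ∀ v ∈ S, (chainLens S ε x v).Nonempty := fun v hv =>
    chainLens_nonempty_of_preconnected hS hSc hε hx hv
  have h1 : cdist S ε x w' ≤ cdist S ε x w + ‖w' - w‖ :=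
    cdist_le_extend (hne w hw) hw' hstep
  have h2 : cdist S ε x w ≤ cdist S ε x w' + ‖w' - w‖ := by
    have := cdist_le_extend (hne w' hw') hw (by rwa [norm_sub_rev])
    rwa [norm_sub_rev] at this
  unfold DFun
  rw [if_pos hw', if_pos hw]
  refine le_trans abs_min_sub_min_le ?_
  rw [abs_le]
  constructor <;> linarith

lemma DFun_measurable [MeasurableSpace X] [OpensMeasurableSpace X]
    (hS : IsOpen S) (hSc : IsPreconnected S) (hε : 0 < ε) (hx : x ∈ S) (hT : 0 ≤ T) :
    Measurable (DFun S ε x T) := by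
  have hne : ∀ v ∈ S, (chainLens S ε x v).Nonempty := fun v hv =>
    chainLens_nonempty_of_preconnected hS hSc hε hx hv
  refine measurable_of_Iio fun c => ?_
  rcases lt_or_ge T c with hc | hc
  · have : DFun S ε x T ⁻¹' Set.Iio c = Set.univ := by
      ext w
      simp only [Set.mem_preimage, Set.mem_Iio, Set.mem_univ, iff_true]
      exact lt_of_le_of_lt (DFun_le hT w) hc
    rw [this]; exact MeasurableSet.univ
  · have heq : DFun S ε x T ⁻¹' Set.Iio c = {w | w ∈ S ∧ cdist S ε x w < c} := by
      ext w
      simp only [Set.mem_preimage, Set.mem_Iio, Set.mem_setOf_eq, DFun]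
      split_ifs with h
      · constructor
        · intro hlt
          refine ⟨h, ?_⟩
          rcases min_cases (cdist S ε x w) T with ⟨he, _⟩ | ⟨he, hle⟩
          · rwa [he] at hlt
          · rw [he] at hlt; linarith
        · intro ⟨_, hlt⟩
          exact lt_of_le_of_lt (min_le_left _ _) hlt
      · constructor
        · intro hlt; linarith
        · intro ⟨hw, _⟩; exact absurd hw h
    rw [heq]
    refine (Metric.isOpen_iff.2 ?_).measurableSet
    rintro w ⟨hwS, hwc⟩
    obtain ⟨r0, hr0, hball⟩ := Metric.isOpen_iff.1 hS w hwS
    refine ⟨min r0 (min ε (c - cdist S ε x w)), lt_min hr0 (lt_min hε (by linarith)), fun u hu => ?_⟩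
    rw [Metric.mem_ball] at hu
    have huS : u ∈ S := hball (Metric.mem_ball.2 (lt_of_lt_of_le hu (min_le_left _ _)))
    have hstep : ‖u - w‖ ≤ ε := by
      rw [← dist_eq_norm]
      exact (lt_of_lt_of_le hu ((min_le_right _ _).trans (min_le_left _ _))).le
    refine ⟨huS, ?_⟩
    have := cdist_le_extend (hne w hwS) huS hstep
    have hd : ‖u - w‖ < c - cdist S ε x w := by
      rw [← dist_eq_norm]
      exact lt_of_lt_of_le hu ((min_le_right _ _).trans (min_le_right _ _))
    linarith

end DFun

section TestFun

open scoped Convolution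

variable {d : ℕ}

/-- The mollified truncated chain distance as a `C¹(K)` test function. -/
lemma exists_testfun (K : Set (EuclideanSpace ℝ (Fin d))) (hKconn : IsPreconnected K)
    {x : EuclideanSpace ℝ (Fin d)} (hx : x ∈ K) {δ η T : ℝ}
    (hδ : 0 < δ) (hη : 0 < η) (hηδ : η ≤ δ / 4) (hT : 0 < T) :
    ∃ f : EuclideanSpace ℝ (Fin d) → ℝ, MemC1 K f ∧ c1Norm K f ≤ T + 1 ∧ f x ≤ η ∧
      ∀ y ∈ K, min (cdist (Metric.thickening δ K) δ x y) T - η ≤ f y := by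
  set S : Set (EuclideanSpace ℝ (Fin d)) := Metric.thickening δ K with hSdef
  have hSopen : IsOpen S := Metric.isOpen_thickening
  have hSconn : IsPreconnected S := isPreconnected_thickening hKconn hδ
  have hKS : K ⊆ S := Metric.self_subset_thickening hδ K
  have hxS : x ∈ S := hKS hx
  have hne : ∀ v ∈ S, (chainLens S δ x v).Nonempty := fun v hv =>
    chainLens_nonempty_of_preconnected hSopen hSconn hδ hxS hv
  set D : EuclideanSpace ℝ (Fin d) → ℝ := DFun S δ x T with hDdef
  have hDmeas : Measurable D := DFun_measurable hSopen hSconn hδ hxS hT.le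
  have hD0 : ∀ w, 0 ≤ D w := DFun_nonneg hT.le
  have hDT : ∀ w, D w ≤ T := DFun_le hT.le
  have hDlip : ∀ w w', w ∈ S → w' ∈ S → ‖w' - w‖ ≤ δ → |D w' - D w| ≤ ‖w' - w‖ :=
    fun w w' hw hw' hs => DFun_lip hSopen hSconn hδ hxS hw hw' hs
  set φ : ContDiffBump (0 : EuclideanSpace ℝ (Fin d)) := ⟨η / 2, η, by positivity, by linarith⟩ with hφdef
  have hφsupp : ∀ u : EuclideanSpace ℝ (Fin d), u ∉ Metric.ball (0 : EuclideanSpace ℝ (Fin d)) η → φ.normed volume u = 0 := by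
    intro u hu
    rw [← Function.notMem_support, φ.support_normed_eq]
    exact hu
  -- integrability of D and of integrands
  have hDloc : MeasureTheory.LocallyIntegrable D volume := by
    intro w
    refine ⟨Metric.ball w 1, Metric.ball_mem_nhds w one_pos, ?_⟩
    refine MeasureTheory.Integrable.mono' (g := fun _ => T) (MeasureTheory.integrableOn_const
      measure_ball_lt_top.ne) hDmeas.aestronglyMeasurable ?_
    filter_upwards with a
    rw [Real.norm_eq_abs, abs_of_nonneg (hD0 a)]
    exact hDT a
  have hInt : ∀ w : EuclideanSpace ℝ (Fin d), MeasureTheory.Integrable (fun u => φ.normed volume u * D (w - u)) := by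
    intro w
    refine MeasureTheory.Integrable.mono' ((φ.integrable_normed).mul_const T)
      ((φ.continuous_normed.measurable).mul
        (hDmeas.comp (measurable_const.sub measurable_id))).aestronglyMeasurable ?_
    filter_upwards with u
    rw [Real.norm_eq_abs, abs_mul, abs_of_nonneg (φ.nonneg_normed u),
      abs_of_nonneg (hD0 (w - u))]
    exact mul_le_mul_of_nonneg_left (hDT _) (φ.nonneg_normed u)
  set f : EuclideanSpace ℝ (Fin d) → ℝ := fun w => ∫ u, φ.normed volume u * D (w - u) with hfdef
  have hconv : f = ((φ.normed volume) ⋆[ContinuousLinearMap.lsmul ℝ ℝ, volume] D) := by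
    funext w
    simp only [hfdef, convolution, ContinuousLinearMap.lsmul_apply, smul_eq_mul]
  have hsmooth : ContDiff ℝ 1 f := by
    rw [hconv]
    exact HasCompactSupport.contDiff_convolution_left _ φ.hasCompactSupport_normed
      φ.contDiff_normed hDloc
  -- pointwise bounds of f
  have hbT : ∀ w, f w ≤ T := by
    intro w
    have := MeasureTheory.integral_mono (hInt w) ((φ.integrable_normed).mul_const T)
      (fun u => mul_le_mul_of_nonneg_left (hDT _) (φ.nonneg_normed u))
    rwa [MeasureTheory.integral_mul_const, φ.integral_normed, one_mul] at this
  have hb0 : ∀ w, 0 ≤ f w := fun w =>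
    MeasureTheory.integral_nonneg fun u => mul_nonneg (φ.nonneg_normed u) (hD0 _)
  have hfx : f x ≤ η := by
    have hpt : ∀ u, φ.normed volume u * D (x - u) ≤ φ.normed volume u * η := by
      intro u
      by_cases hu : u ∈ Metric.ball (0 : EuclideanSpace ℝ (Fin d)) η
      · have hnu : ‖u‖ < η := by rwa [← mem_ball_zero_iff]
        have hxuS : x - u ∈ S := by
          rw [hSdef, Metric.mem_thickening_iff]
          refine ⟨x, hx, ?_⟩
          rw [dist_eq_norm]
          simpa using lt_of_lt_of_le hnu (by linarith)
        have hstep : ‖(x - u) - x‖ ≤ δ := by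
          simpa using (le_of_lt (lt_of_lt_of_le hnu (by linarith)))
        have hcd : cdist S δ x (x - u) ≤ η := by
          have h1 := cdist_le_extend (hne x hxS) hxuS hstep
          have h2 := cdist_self (S := S) (ε := δ) hxS
          have h3 : ‖(x - u) - x‖ ≤ η := by simpa using hnu.le
          linarith
        have hD : D (x - u) ≤ η := by
          rw [hDdef]
          unfold DFun
          rw [if_pos hxuS]
          exact le_trans (min_le_left _ _) hcd
        exact mul_le_mul_of_nonneg_left hD (φ.nonneg_normed u)
      · rw [hφsupp u hu, zero_mul, zero_mul]
    have := MeasureTheory.integral_mono (hInt x) ((φ.integrable_normed).mul_const η) hpt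
    rwa [MeasureTheory.integral_mul_const, φ.integral_normed, one_mul] at this
  have hfy : ∀ y ∈ K, min (cdist S δ x y) T - η ≤ f y := by
    intro y hy
    set m : ℝ := min (cdist S δ x y) T with hm
    have hpt : ∀ u, φ.normed volume u * (m - η) ≤ φ.normed volume u * D (y - u) := by
      intro u
      by_cases hu : u ∈ Metric.ball (0 : EuclideanSpace ℝ (Fin d)) η
      · have hnu : ‖u‖ < η := by rwa [← mem_ball_zero_iff]
        have hyS : y ∈ S := hKS hy
        have hyuS : y - u ∈ S := by
          rw [hSdef, Metric.mem_thickening_iff]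
          refine ⟨y, hy, ?_⟩
          rw [dist_eq_norm]
          simpa using lt_of_lt_of_le hnu (by linarith)
        have hstep : ‖(y - u) - y‖ ≤ δ := by
          simpa using (le_of_lt (lt_of_lt_of_le hnu (by linarith)))
        have hDy : D y = m := by
          rw [hDdef]; unfold DFun; rw [if_pos hyS]
        have hlip := hDlip y (y - u) hyS hyuS hstep
        have h3 : ‖(y - u) - y‖ ≤ η := by simpa using hnu.le
        have : m - η ≤ D (y - u) := by
          rw [abs_le] at hlip
          have := hlip.1
          rw [hDy] at this
          linarith
        exact mul_le_mul_of_nonneg_left this (φ.nonneg_normed u)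
      · rw [hφsupp u hu, zero_mul, zero_mul]
    have := MeasureTheory.integral_mono ((φ.integrable_normed).mul_const (m - η)) (hInt y) hpt
    rwa [MeasureTheory.integral_mul_const, φ.integral_normed, one_mul] at this
  -- local Lipschitz bound near K and derivative bound
  have hflip : ∀ z ∈ K, LipschitzOnWith 1 f (Metric.ball z (δ / 4)) := by
    intro z hz
    refine LipschitzOnWith.of_dist_le_mul fun w1 h1 w2 h2 => ?_
    rw [NNReal.coe_one, one_mul, Real.dist_eq]
    have hmem : ∀ u : EuclideanSpace ℝ (Fin d), u ∈ Metric.ball (0 : EuclideanSpace ℝ (Fin d)) η →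
        ∀ w ∈ Metric.ball z (δ / 4), w - u ∈ S := by
      intro u hu w hw
      rw [hSdef, Metric.mem_thickening_iff]
      refine ⟨z, hz, ?_⟩
      calc dist (w - u) z ≤ dist (w - u) w + dist w z := dist_triangle _ _ _
        _ < η + δ / 4 := by
            refine add_lt_add_of_le_of_lt ?_ (Metric.mem_ball.1 hw)
            rw [dist_eq_norm]
            simpa using (mem_ball_zero_iff.1 hu).le
        _ ≤ δ / 2 := by linarith
        _ < δ := by linarith
    have hd12 : ‖w1 - w2‖ ≤ δ := by
      rw [← dist_eq_norm]
      calc dist w1 w2 ≤ dist w1 z + dist z w2 := dist_triangle _ _ _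
        _ ≤ δ / 4 + δ / 4 := add_le_add (Metric.mem_ball.1 h1).le
            (by rw [dist_comm]; exact (Metric.mem_ball.1 h2).le)
        _ ≤ δ := by linarith
    have heq : f w1 - f w2 = ∫ u, (φ.normed volume u * D (w1 - u)
        - φ.normed volume u * D (w2 - u)) := (MeasureTheory.integral_sub (hInt w1) (hInt w2)).symm
    rw [heq]
    have habs := MeasureTheory.norm_integral_le_integral_norm
      (fun u => φ.normed volume u * D (w1 - u) - φ.normed volume u * D (w2 - u)) (μ := volume)
    rw [Real.norm_eq_abs] at habs
    refine le_trans habs ?_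
    have hptw : ∀ u, ‖φ.normed volume u * D (w1 - u) - φ.normed volume u * D (w2 - u)‖
        ≤ φ.normed volume u * dist w1 w2 := by
      intro u
      rw [Real.norm_eq_abs, ← mul_sub, abs_mul, abs_of_nonneg (φ.nonneg_normed u)]
      by_cases hu : u ∈ Metric.ball (0 : EuclideanSpace ℝ (Fin d)) η
      · refine mul_le_mul_of_nonneg_left ?_ (φ.nonneg_normed u)
        have := hDlip (w2 - u) (w1 - u) (hmem u hu w2 h2) (hmem u hu w1 h1)
          (by simpa [sub_sub_sub_cancel_right] using hd12)
        rw [dist_eq_norm]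
        simpa [sub_sub_sub_cancel_right] using this
      · rw [hφsupp u hu]
        simp
    have := MeasureTheory.integral_mono (((hInt w1).sub (hInt w2)).norm)
      ((φ.integrable_normed).mul_const (dist w1 w2)) hptw
    rwa [MeasureTheory.integral_mul_const, φ.integral_normed, one_mul] at this
  have hfderiv : ∀ z ∈ K, ‖fderiv ℝ f z‖ ≤ 1 := by
    intro z hz
    have := norm_fderiv_le_of_lipschitzOn ℝ
      (Metric.ball_mem_nhds z (by linarith : (0:ℝ) < δ / 4)) (hflip z hz)
    simpa using this
  set g : EuclideanSpace ℝ (Fin d) → EuclideanSpace ℝ (Fin d) := fun w => gradient f w with hgdef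
  have hgnorm : ∀ z ∈ K, ‖g z‖ ≤ 1 := by
    intro z hz
    rw [hgdef]
    simp only [gradient, LinearIsometryEquiv.norm_map]
    exact hfderiv z hz
  have hgcont : ContinuousOn g K := by
    refine Continuous.continuousOn ?_
    rw [hgdef]
    simp only [gradient]
    exact (LinearIsometryEquiv.continuous _).comp (hsmooth.continuous_fderiv one_ne_zero)
  have hderiv : IsDerivOn K f g := by
    intro z hz
    have hd : HasGradientAt f (g z) z := by
      rw [hgdef]
      exact ((hsmooth.differentiable one_ne_zero) z).hasGradientAt
    have ht := hasGradientAt_iff_tendsto.1 hd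
    refine squeeze_zero_norm (fun y => ?_) (ht.mono_left nhdsWithin_le_nhds)
    rw [Real.norm_eq_abs, abs_div, abs_norm, div_eq_inv_mul, Real.norm_eq_abs]
  have hmem : MemC1 K f := ⟨g, hgcont, hderiv⟩
  have hc1 : c1Norm K f ≤ T + 1 := by
    have h1 : supNormOn K f ≤ T := by
      refine Real.sSup_le ?_ hT.le
      rintro r ⟨w, hw, rfl⟩
      show ‖f w‖ ≤ T
      rw [Real.norm_eq_abs, abs_le]
      exact ⟨by linarith [hb0 w], hbT w⟩
    have h2 : supNormOn K g ≤ 1 := by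
      refine Real.sSup_le ?_ zero_le_one
      rintro r ⟨w, hw, rfl⟩
      exact hgnorm w hw
    have h3 : sInf {r | ∃ df, ContinuousOn df K ∧ IsDerivOn K f df ∧ r = supNormOn K df} ≤ 1 := by
      refine le_trans (csInf_le ?_ ⟨g, hgcont, hderiv, rfl⟩) h2
      refine ⟨0, ?_⟩
      rintro r ⟨df, _, _, rfl⟩
      exact Real.sSup_nonneg fun v => by rintro ⟨w, hw, rfl⟩; exact norm_nonneg _
    rw [c1Norm]
    linarith
  exact ⟨f, hmem, hc1, hfx, hfy⟩

end TestFun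

section StepPath

open scoped Classical

variable {X : Type*} [NormedAddCommGroup X]

/-- Step-function parametrization of a chain, jumping at times proportional to arclength. -/
noncomputable def stepPath (p : ℕ → X) (n : ℕ) (t : ℝ) : X :=
  p (Nat.findGreatest (fun i => chainLen p i ≤ t * chainLen p n) n)

lemma chainLen_zero (p : ℕ → X) : chainLen p 0 = 0 := by simp [chainLen]

lemma chainLen_succ (p : ℕ → X) (i : ℕ) :
    chainLen p (i + 1) = chainLen p i + ‖p (i + 1) - p i‖ := by
  rw [chainLen, chainLen, Finset.sum_range_succ]

lemma chainLen_mono (p : ℕ → X) : Monotone (chainLen p) := by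
  intro i j hij
  exact Finset.sum_le_sum_of_subset_of_nonneg (Finset.range_subset_range.2 hij)
    (fun _ _ _ => norm_nonneg _)

lemma norm_sub_le_chainLen (p : ℕ → X) {i j : ℕ} (hij : i ≤ j) :
    ‖p j - p i‖ ≤ chainLen p j - chainLen p i := by
  induction j, hij using Nat.le_induction with
  | base => simp
  | succ j hij ih =>
    have h1 : ‖p (j + 1) - p i‖ ≤ ‖p (j + 1) - p j‖ + ‖p j - p i‖ := by
      have := norm_add_le (p (j + 1) - p j) (p j - p i)
      simpa [sub_add_sub_cancel] using this
    rw [chainLen_succ]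
    linarith

lemma eq_of_chainLen_eq_zero (p : ℕ → X) {i : ℕ} (h : chainLen p i ≤ 0) : p i = p 0 := by
  have h2 := norm_sub_le_chainLen p (Nat.zero_le i)
  rw [chainLen_zero] at h2
  have : ‖p i - p 0‖ ≤ 0 := by linarith
  have := le_antisymm this (norm_nonneg _)
  rwa [norm_sub_eq_zero_iff] at this

lemma stepPath_zero (p : ℕ → X) (n : ℕ) : stepPath p n 0 = p 0 := by
  unfold stepPath
  apply eq_of_chainLen_eq_zero
  have := Nat.findGreatest_spec (P := fun i => chainLen p i ≤ 0 * chainLen p n)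
    (Nat.zero_le n) (by simp [chainLen_zero])
  simpa using this

lemma stepPath_one (p : ℕ → X) (n : ℕ) : stepPath p n 1 = p n := by
  unfold stepPath
  have h1 : Nat.findGreatest (fun i => chainLen p i ≤ 1 * chainLen p n) n = n := by
    refine le_antisymm (Nat.findGreatest_le n) ?_
    exact Nat.le_findGreatest le_rfl (by rw [one_mul])
  rw [h1]

lemma stepPath_mem {S : Set X} {p : ℕ → X} {n : ℕ} (hmem : ∀ i ≤ n, p i ∈ S) (t : ℝ) :
    stepPath p n t ∈ S :=
  hmem _ (Nat.findGreatest_le n)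

lemma stepPath_dist {p : ℕ → X} {n : ℕ} {ε : ℝ} (hε : 0 ≤ ε)
    (hsteps : ∀ i < n, ‖p (i + 1) - p i‖ ≤ ε) {t t' : ℝ}
    (ht : 0 ≤ t) (htt' : t ≤ t') (ht' : t' ≤ 1) :
    ‖stepPath p n t' - stepPath p n t‖ ≤ (t' - t) * chainLen p n + ε := by
  set ℓ := chainLen p n with hℓ
  have hℓ0 : 0 ≤ ℓ := chainLen_nonneg p n
  set P : ℕ → Prop := fun i => chainLen p i ≤ t * ℓ with hP
  set P' : ℕ → Prop := fun i => chainLen p i ≤ t' * ℓ with hP'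
  set i := Nat.findGreatest P n with hi
  set j := Nat.findGreatest P' n with hj
  have hPi : P i := Nat.findGreatest_spec (Nat.zero_le n)
    (by simp only [hP, chainLen_zero]; exact mul_nonneg ht hℓ0)
  have hP'j : P' j := Nat.findGreatest_spec (Nat.zero_le n)
    (by simp only [hP', chainLen_zero]; exact mul_nonneg (le_trans ht htt') hℓ0)
  have hij : i ≤ j := by
    refine Nat.le_findGreatest (Nat.findGreatest_le n) ?_
    show chainLen p i ≤ t' * ℓ
    exact le_trans hPi (by nlinarith)
  have hsj : chainLen p j ≤ t' * ℓ := hP'j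
  have hsi : t * ℓ - ε ≤ chainLen p i := by
    rcases Nat.lt_or_ge i n with hin | hin
    · have hnot : ¬ P (i + 1) :=
        Nat.findGreatest_is_greatest (Nat.lt_succ_self i) (Nat.succ_le_of_lt hin)
      have : t * ℓ < chainLen p (i + 1) := lt_of_not_ge hnot
      rw [chainLen_succ] at this
      have := hsteps i hin
      linarith
    · have hieq : i = n := le_antisymm (Nat.findGreatest_le n) hin
      rw [hieq]
      nlinarith
  have hnorm : ‖p j - p i‖ ≤ chainLen p j - chainLen p i := norm_sub_le_chainLen p hij
  show ‖p j - p i‖ ≤ (t' - t) * ℓ + ε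
  nlinarith

end StepPath


/-- For a compact connected set `K`: if for every `x ∈ K` there is `C_x > 0` with
`|f y - f x| / ‖y - x‖ ≤ C_x ‖f‖_{C¹(K)}` for all `f ∈ C¹(K)` and `y ∈ K, y ≠ x`, then
`K` is pointwise Whitney regular. -/
theorem pointwiseWhitneyRegular_of_pointwise_bound {d : ℕ}
    (K : Set (EuclideanSpace ℝ (Fin d))) (hK : IsCompact K) (hconn : IsConnected K)
    (hbd : ∀ x ∈ K, ∃ C > (0:ℝ), ∀ f : EuclideanSpace ℝ (Fin d) → ℝ,
      MemC1 K f → ∀ y ∈ K, y ≠ x → |f y - f x| ≤ C * c1Norm K f * ‖y - x‖) :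
    PointwiseWhitneyRegular K := by
  intro x hxK
  obtain ⟨C, hC, hCf⟩ := hbd x hxK
  refine ⟨3 * C + 1, by linarith, Metric.ball x (1 / (2 * C)),
    Metric.ball_mem_nhds x (by positivity), ?_⟩
  rintro y ⟨hyV, hyK⟩
  by_cases hxy : y = x
  · subst hxy
    refine ⟨fun _ => y, continuousOn_const, fun t _ => hyK, rfl, rfl, ?_⟩
    have hconst : eVariationOn (fun _ : ℝ => y) (Icc 0 1) = 0 :=
      eVariationOn.constant_on (by rintro a ⟨s, _, rfl⟩ b ⟨u, _, rfl⟩; rfl)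
    rw [hconst]
    exact zero_le
  -- main case `y ≠ x`
  set R := ‖y - x‖ with hR
  have hR0 : 0 < R := by rw [hR, norm_pos_iff, sub_ne_zero]; exact hxy
  have hCR : C * R < 1 / 2 := by
    have hd : dist y x < 1 / (2 * C) := Metric.mem_ball.1 hyV
    rw [dist_eq_norm, ← hR] at hd
    calc C * R < C * (1 / (2 * C)) := mul_lt_mul_of_pos_left hd hC
      _ = 1 / 2 := by field_simp
  have hCR0 : 0 < C * R := mul_pos hC hR0
  set L := 3 * C * R with hL
  have hL0 : 0 ≤ L := by positivity
  -- chain-distance bound via the test function and the hypothesis `hbd`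
  have key : ∀ δ : ℝ, 0 < δ → cdist (Metric.thickening δ K) δ x y ≤ L + δ := by
    intro δ hδ
    have hη : (0:ℝ) < δ / 8 := by linarith
    have hT : (0:ℝ) < 4 * C * R + 4 * (δ / 8) := by positivity
    obtain ⟨f, hmem, hc1, hfx, hfy⟩ := exists_testfun K hconn.isPreconnected hxK hδ hη
      (by linarith) hT
    set η := δ / 8 with hηdef
    set T := 4 * C * R + 4 * η with hTdef
    have hineq := hCf f hmem y hyK hxy
    have hc1' : C * c1Norm K f * ‖y - x‖ ≤ C * (T + 1) * R := by
      rw [← hR]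
      exact mul_le_mul_of_nonneg_right (mul_le_mul_of_nonneg_left hc1 hC.le) (norm_nonneg _)
    have h3 : min (cdist (Metric.thickening δ K) δ x y) T - 2 * η ≤ C * (T + 1) * R := by
      have h5 := hfy y hyK
      have h6 := le_abs_self (f y - f x)
      linarith
    have hT2 : T / 2 = 2 * (C * R) + 2 * η := by rw [hTdef]; ring
    have hCTR : T * (C * R) ≤ T * (1 / 2) := mul_le_mul_of_nonneg_left hCR.le hT.le
    have h4 : C * (T + 1) * R + 2 * η < T := by nlinarith
    have h7 : cdist (Metric.thickening δ K) δ x y < T := by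
      by_contra hge
      push_neg at hge
      rw [min_eq_right hge] at h3
      linarith
    rw [min_eq_left h7.le] at h3
    have h8 : C * (T + 1) * R + 2 * η ≤ L + δ := by nlinarith
    linarith
  -- approximating chains at scales 1/(k+1)
  have hδk : ∀ k : ℕ, (0:ℝ) < 1 / ((k:ℝ) + 1) := fun k => by positivity
  have hchain : ∀ k : ℕ, ∃ nn pp, IsEpsChain (Metric.thickening (1/((k:ℝ)+1)) K)
      (1/((k:ℝ)+1)) x y nn pp ∧ chainLen pp nn ≤ L + 2 * (1/((k:ℝ)+1)) := by
    intro k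
    have hδ := hδk k
    have hSconn := isPreconnected_thickening (K := K) hconn.isPreconnected hδ
    have hxS : x ∈ Metric.thickening (1/((k:ℝ)+1)) K := Metric.self_subset_thickening hδ K hxK
    have hyS : y ∈ Metric.thickening (1/((k:ℝ)+1)) K := Metric.self_subset_thickening hδ K hyK
    have hnonempty := chainLens_nonempty_of_preconnected Metric.isOpen_thickening hSconn hδ hxS hyS
    obtain ⟨ℓ, hℓmem, hℓlt⟩ := Real.lt_sInf_add_pos hnonempty hδ
    obtain ⟨nn, pp, hch, rfl⟩ := hℓmem
    refine ⟨nn, pp, hch, ?_⟩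
    have hkey := key (1/((k:ℝ)+1)) hδ
    unfold cdist at hkey
    linarith
  choose nn pp hch hlen using hchain
  set γf : ℕ → ℝ → EuclideanSpace ℝ (Fin d) := fun k => stepPath (pp k) (nn k) with hγf
  have hγf0 : ∀ k, γf k 0 = x := fun k => by
    show stepPath (pp k) (nn k) 0 = x
    rw [stepPath_zero, (hch k).1]
  have hγf1 : ∀ k, γf k 1 = y := fun k => by
    show stepPath (pp k) (nn k) 1 = y
    rw [stepPath_one, (hch k).2.1]
  have hγfmem : ∀ (k : ℕ) (t : ℝ), γf k t ∈ Metric.thickening (1/((k:ℝ)+1)) K := fun k t =>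
    stepPath_mem (hch k).2.2.1 t
  have hγfdist : ∀ k : ℕ, ∀ t t' : ℝ, 0 ≤ t → t ≤ t' → t' ≤ 1 →
      dist (γf k t') (γf k t) ≤ (t' - t) * (L + 2 * (1/((k:ℝ)+1))) + 1/((k:ℝ)+1) := by
    intro k t t' ht htt' ht'
    rw [dist_eq_norm]
    have h1 := stepPath_dist (p := pp k) (n := nn k) (hδk k).le (hch k).2.2.2 ht htt' ht'
    have h2 : (t' - t) * chainLen (pp k) (nn k) ≤ (t' - t) * (L + 2 * (1/((k:ℝ)+1))) :=
      mul_le_mul_of_nonneg_left (hlen k) (by linarith)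
    calc ‖γf k t' - γf k t‖ ≤ (t' - t) * chainLen (pp k) (nn k) + 1/((k:ℝ)+1) := h1
      _ ≤ _ := by linarith
  -- ultrafilter limit of the step paths
  set U : Ultrafilter ℕ := Ultrafilter.of atTop with hU
  have hUle : (U : Filter ℕ) ≤ atTop := Ultrafilter.of_le _
  have hKc : IsCompact (Metric.cthickening 1 K) := hK.cthickening
  have hsub1 : ∀ k : ℕ, Metric.thickening (1/((k:ℝ)+1)) K ⊆ Metric.cthickening 1 K := by
    intro k
    refine Metric.thickening_subset_cthickening_of_le ?_ K
    rw [div_le_one (by positivity)]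
    linarith [Nat.cast_nonneg (α := ℝ) k]
  have hlim : ∀ t : ℝ, ∃ z, Tendsto (fun k => γf k t) (U : Filter ℕ) (𝓝 z) := by
    intro t
    obtain ⟨z, _, hle⟩ := hKc.ultrafilter_le_nhds (U.map fun k => γf k t)
      (by
        rw [Ultrafilter.coe_map, Filter.le_principal_iff]
        exact Filter.mem_map.2 (Filter.univ_mem' fun k => hsub1 k (hγfmem k t)))
    exact ⟨z, by rwa [Filter.Tendsto, ← Ultrafilter.coe_map]⟩
  choose γ hγlim using hlim
  have htendzero : Tendsto (fun k : ℕ => 1/((k:ℝ)+1)) atTop (𝓝 0) :=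
    tendsto_one_div_add_atTop_nhds_zero_nat
  have hγ0 : γ 0 = x := by
    refine tendsto_nhds_unique (hγlim 0) ?_
    have heq : (fun k => γf k 0) = fun _ => x := funext hγf0
    rw [heq]; exact tendsto_const_nhds
  have hγ1 : γ 1 = y := by
    refine tendsto_nhds_unique (hγlim 1) ?_
    have heq : (fun k => γf k 1) = fun _ => y := funext hγf1
    rw [heq]; exact tendsto_const_nhds
  have hγlip : ∀ t ∈ Icc (0:ℝ) 1, ∀ t' ∈ Icc (0:ℝ) 1, t ≤ t' →
      dist (γ t') (γ t) ≤ L * (t' - t) := by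
    intro t ht t' ht' htt'
    have hb : Tendsto (fun k : ℕ => (t' - t) * (L + 2 * (1/((k:ℝ)+1))) + 1/((k:ℝ)+1)) atTop
        (𝓝 ((t' - t) * (L + 2 * 0) + 0)) :=
      (((htendzero.const_mul 2).const_add L).const_mul (t' - t)).add htendzero
    rw [mul_zero, add_zero, add_zero] at hb
    have hd : Tendsto (fun k => dist (γf k t') (γf k t)) (U : Filter ℕ)
        (𝓝 (dist (γ t') (γ t))) := (hγlim t').dist (hγlim t)
    have hle := le_of_tendsto_of_tendsto' hd (hb.mono_left hUle)
      (fun k => hγfdist k t t' ht.1 htt' ht'.2)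
    rwa [mul_comm] at hle
  have hγK : ∀ t, γ t ∈ K := by
    intro t
    have hcth : ∀ ε : ℝ, 0 < ε → γ t ∈ Metric.cthickening ε K := by
      intro ε hε
      refine Metric.isClosed_cthickening.mem_of_tendsto (hγlim t) ?_
      have hev : ∀ᶠ k : ℕ in atTop, 1/((k:ℝ)+1) < ε := htendzero.eventually (gt_mem_nhds hε)
      refine (hev.filter_mono hUle).mono fun k hk => ?_
      exact Metric.thickening_subset_cthickening_of_le hk.le K (hγfmem k t)
    have hcl : γ t ∈ closure K := by
      rw [Metric.closure_eq_iInter_cthickening]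
      simp only [Set.mem_iInter]
      intro δ hδ
      exact hcth δ hδ
    rwa [hK.isClosed.closure_eq] at hcl
  set Lnn : NNReal := L.toNNReal with hLnn
  have hγlipOn : LipschitzOnWith Lnn γ (Icc 0 1) := by
    refine LipschitzOnWith.of_dist_le_mul fun a ha b hb => ?_
    rcases le_total a b with hab | hab
    · rw [dist_comm (γ a) (γ b), Real.dist_eq, abs_of_nonpos (sub_nonpos.2 hab),
        hLnn, Real.coe_toNNReal _ hL0, neg_sub]
      exact hγlip a ha b hb hab
    · rw [Real.dist_eq, abs_of_nonneg (sub_nonneg.2 hab), hLnn, Real.coe_toNNReal _ hL0]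
      exact hγlip b hb a ha hab
  refine ⟨γ, hγlipOn.continuousOn, fun t _ => hγK t, hγ0, hγ1, ?_⟩
  have hvar := hγlipOn.comp_eVariationOn_le (Set.mapsTo_id (Icc (0:ℝ) 1))
  rw [Function.comp_id] at hvar
  have hid : eVariationOn id (Icc (0:ℝ) 1) ≤ ENNReal.ofReal 1 := by
    have h := (monotone_id.monotoneOn (Icc (0:ℝ) 1)).eVariationOn_le
      (Set.left_mem_Icc.2 zero_le_one) (Set.right_mem_Icc.2 zero_le_one)
    simpa [Set.inter_self] using h
  have hfinal : eVariationOn γ (Icc (0:ℝ) 1) ≤ (Lnn : ENNReal) * ENNReal.ofReal 1 :=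
    le_trans hvar (mul_le_mul_right hid _)
  rw [ENNReal.ofReal_one, mul_one] at hfinal
  refine le_trans hfinal ?_
  have hcoe : (Lnn : ENNReal) = ENNReal.ofReal L := rfl
  rw [hcoe]
  refine ENNReal.ofReal_le_ofReal ?_
  rw [norm_sub_rev, ← hR, hL]
  nlinarith
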